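/- If (D_k)_{k∈ℤ} is a family of linear subspaces of A with D_k ⊆ A_k for every k ∈ ℤ, and the algebraic sum ∑_{k∈ℤ} D_k is dense in A, then for every k ∈ ℤ the norm-closure of D_k equals A_k. -/

import Mathlib

open MeasureTheory

/-- If `(D_k)_{k ∈ ℤ}` is a family of linear subspaces of `A` with
`D_k ⊆ A_k` for all `k`, and the algebraic sum `∑_k D_k` (the submodule `⨆ k, D k`)
is dense in `A`, then the norm-closure of `D_k` equals the spectral subspace `A_k`
for every `k`. -/
theorem stmt3
    {A : Type*} [NormedAddCommGroup A] [NormedSpace ℂ A] [CompleteSpace A]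
    [MeasurableSpace Circle] [BorelSpace Circle]
    (ρ : Circle → A ≃ₗᵢ[ℂ] A)
    (hρ_mul : ∀ s t : Circle, ∀ a : A, ρ (s * t) a = ρ s (ρ t a))
    (hρ_one : ∀ a : A, ρ 1 a = a)
    (hρ_cont : ∀ a : A, Continuous fun t : Circle => ρ t a)
    (D : ℤ → Submodule ℂ A)
    (hD : ∀ k : ℤ, (D k : Set A) ⊆ {a : A | ∀ t : Circle, ρ t a = ((t : ℂ) ^ k) • a})
    (hdense : Dense ((⨆ k : ℤ, D k : Submodule ℂ A) : Set A)) :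
    ∀ k : ℤ, closure (D k : Set A) = {a : A | ∀ t : Circle, ρ t a = ((t : ℂ) ^ k) • a} := by
  intro k
  set μ : Measure Circle := Measure.haarMeasure ⊤ with hμ
  haveI hprob : IsProbabilityMeasure μ :=
    ⟨by simpa using Measure.haarMeasure_self (K₀ := (⊤ : TopologicalSpace.PositiveCompacts Circle))⟩
  haveI hinv : μ.IsMulLeftInvariant := by rw [hμ]; infer_instance
  have hcoe_zpow : ∀ (t : Circle) (m : ℤ), ((t ^ m : Circle) : ℂ) = (t : ℂ) ^ m := by
    intro t m; exact_mod_cast rfl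
  -- integral of nontrivial characters is zero
  have hchar : ∀ m : ℤ, m ≠ 0 → ∫ t : Circle, ((t : ℂ) ^ m) ∂μ = 0 := by
    intro m hm
    set c := ∫ t : Circle, ((t : ℂ) ^ m) ∂μ with hc
    set s : Circle := Circle.exp (Real.pi / m) with hs
    have hsm : (s : ℂ) ^ m = -1 := by
      rw [hs, Circle.coe_exp, ← Complex.exp_int_mul]
      have : (m : ℂ) * ((Real.pi / (m : ℝ) : ℝ) * Complex.I) = Real.pi * Complex.I := by
        have hm' : (m : ℂ) ≠ 0 := Int.cast_ne_zero.2 hm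
        push_cast
        field_simp
      rw [this, Complex.exp_pi_mul_I]
    have h1 : (s : ℂ) ^ m * c = c := by
      have := integral_mul_left_eq_self (μ := μ) (fun t : Circle => ((t : ℂ)) ^ m) s
      calc (s : ℂ) ^ m * c = ∫ t : Circle, ((s : ℂ) ^ m * (t : ℂ) ^ m) ∂μ := by
            rw [hc, ← integral_const_mul]
        _ = ∫ t : Circle, (((s * t : Circle) : ℂ)) ^ m ∂μ := by
            congr 1; funext t; rw [Circle.coe_mul, mul_zpow]
        _ = c := this
    rw [hsm, neg_one_mul] at h1
    have h2 : c + c = 0 := by linear_combination -h1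
    exact add_self_eq_zero.mp h2
  -- integral of character times a constant vector
  have hsmul : ∀ (m : ℤ) (a : A),
      (∫ t : Circle, ((t : ℂ) ^ m) • a ∂μ) = if m = 0 then a else 0 := by
    intro m a
    rw [integral_smul_const]
    by_cases hm : m = 0
    · subst hm; simp
    · rw [hchar m hm]; simp [hm]
  -- the averaging operator
  set Λ : A → A := fun a => ∫ t : Circle, ((t ^ (-k) : Circle) : ℂ) • ρ t a ∂μ with hΛ
  have hcont : ∀ a : A, Continuous fun t : Circle => ((t ^ (-k) : Circle) : ℂ) • ρ t a := by
    intro a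
    exact (show Continuous fun t : Circle => ((t ^ (-k) : Circle) : ℂ) from continuous_subtype_val.comp (continuous_zpow (-k))).smul (hρ_cont a)
  have hint : ∀ a : A, Integrable (fun t : Circle => ((t ^ (-k) : Circle) : ℂ) • ρ t a) μ := by
    intro a
    exact (hcont a).integrable_of_hasCompactSupport (HasCompactSupport.of_compactSpace _)
  -- Λ fixes A_k
  have hΛfix : ∀ a : A, (∀ t : Circle, ρ t a = ((t : ℂ) ^ k) • a) → Λ a = a := by
    intro a ha
    have key : (fun t : Circle => ((t ^ (-k) : Circle) : ℂ) • ρ t a) = fun _ : Circle => a := by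
      funext t
      rw [ha t, smul_smul, hcoe_zpow, ← zpow_add₀ (Circle.coe_ne_zero t)]
      simp
    rw [hΛ]; simp only [key]; simp
  -- Λ on D j
  have hΛD : ∀ (j : ℤ) (a : A), a ∈ D j → Λ a = if j - k = 0 then a else 0 := by
    intro j a haj
    have ha := hD j haj
    have key : (fun t : Circle => ((t ^ (-k) : Circle) : ℂ) • ρ t a)
        = fun t : Circle => ((t : ℂ) ^ (j - k)) • a := by
      funext t
      rw [ha t, smul_smul, hcoe_zpow, ← zpow_add₀ (Circle.coe_ne_zero t)]
      ring_nf
    rw [hΛ]; simp only [key]; exact hsmul (j - k) a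
  -- Λ is additive / preserves subtraction
  have hΛsub : ∀ a b : A, Λ (a - b) = Λ a - Λ b := by
    intro a b
    rw [hΛ]
    simp only [map_sub, smul_sub]
    exact integral_sub (hint a) (hint b)
  have hΛadd : ∀ a b : A, Λ (a + b) = Λ a + Λ b := by
    intro a b
    rw [hΛ]
    simp only [map_add, smul_add]
    exact integral_add (hint a) (hint b)
  have hΛzero : Λ 0 = 0 := by
    rw [hΛ]; simp
  -- Λ is norm-decreasing, hence continuous
  have hΛnorm : ∀ a : A, ‖Λ a‖ ≤ ‖a‖ := by
    intro a
    calc ‖Λ a‖ ≤ ∫ t : Circle, ‖((t ^ (-k) : Circle) : ℂ) • ρ t a‖ ∂μ :=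
          norm_integral_le_integral_norm _
      _ = ∫ _t : Circle, ‖a‖ ∂μ := by
          congr 1; funext t
          rw [norm_smul]
          simp [(ρ t).norm_map, Circle.norm_coe]
      _ = ‖a‖ := by simp
  have hΛcont : Continuous Λ := by
    have : LipschitzWith 1 Λ := by
      apply LipschitzWith.of_dist_le_mul
      intro a b
      simp only [dist_eq_norm, NNReal.coe_one, one_mul, ← hΛsub]
      exact hΛnorm (a - b)
    exact this.continuous
  -- Λ maps the algebraic sum into D k
  have hmaps : Set.MapsTo Λ ((⨆ j : ℤ, D j : Submodule ℂ A) : Set A) (D k : Set A) := by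
    intro x hx
    refine Submodule.iSup_induction (motive := fun x => Λ x ∈ D k) D hx ?_ ?_ ?_
    · intro j y hy
      rw [hΛD j y hy]
      by_cases h : j - k = 0
      · have : j = k := by omega
        subst this
        simpa [h] using hy
      · simp [h]
    · simpa [hΛzero] using (D k).zero_mem
    · intro x y hx hy
      rw [hΛadd]
      exact (D k).add_mem hx hy
  -- A_k is closed
  have hclosed : IsClosed {a : A | ∀ t : Circle, ρ t a = ((t : ℂ) ^ k) • a} := by
    have : {a : A | ∀ t : Circle, ρ t a = ((t : ℂ) ^ k) • a}
        = ⋂ t : Circle, {a : A | ρ t a = ((t : ℂ) ^ k) • a} := by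
      ext a; simp
    rw [this]
    exact isClosed_iInter fun t =>
      isClosed_eq (ρ t).continuous (continuous_id.const_smul _)
  apply subset_antisymm
  · exact closure_minimal (hD k) hclosed
  · intro a ha
    have h1 : Λ a = a := hΛfix a ha
    have h2 : a ∈ closure ((⨆ j : ℤ, D j : Submodule ℂ A) : Set A) := hdense a
    have h3 : Λ a ∈ closure (Λ '' ((⨆ j : ℤ, D j : Submodule ℂ A) : Set A)) := by
      have := image_closure_subset_closure_image (s := ((⨆ j : ℤ, D j : Submodule ℂ A) : Set A)) hΛcont
      exact this ⟨a, h2, rfl⟩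
    rw [h1] at h3
    exact closure_mono hmaps.image_subset h3
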